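/- Consider the greedy peeling process on a finite weighted graph G: set H_n = G, and for i = n down to 1, let v_i be a vertex of minimum weighted degree r_i in H_i, and let H_{i−1} = H_i − v_i. Then for any real w, if I(w) is the largest index i such that r_i ≥ w, the subgraph H_{I(w)} equals the w-core of G. -/
import Mathlib


open Finset

variable {V : Type*} [Fintype V] [DecidableEq V]

/-- Weighted degree of vertex `v` in the subgraph induced on `S`. -/
def wDeg (w : V → V → ℝ) (S : Finset V) (v : V) : ℝ := ∑ u ∈ S, w v u

/-- Total edge weight of the subgraph induced on `S`. -/
noncomputable def wTot (w : V → V → ℝ) (S : Finset V) : ℝ :=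
  (∑ u ∈ S, ∑ x ∈ S, w u x) / 2

/-- Density of the subgraph induced on `S`. -/
noncomputable def dens (w : V → V → ℝ) (S : Finset V) : ℝ := wTot w S / S.card

/-- in the greedy peeling process, if I is the largest index with
r_I ≥ w₀, then H_I is the w₀-core of G: it has minimum weighted degree ≥ w₀ and
contains every induced subgraph of minimum weighted degree ≥ w₀. -/
theorem stmt3 (w : V → V → ℝ) (hsymm : ∀ u v, w u v = w v u)
    (hnn : ∀ u v, 0 ≤ w u v) (hdiag : ∀ v, w v v = 0)
    (H : ℕ → Finset V) (v : ℕ → V) (r : ℕ → ℝ)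
    (hHn : H (Fintype.card V) = Finset.univ)
    (hpeel : ∀ i, 1 ≤ i → i ≤ Fintype.card V →
      v i ∈ H i ∧ r i = wDeg w (H i) (v i) ∧
      (∀ u ∈ H i, r i ≤ wDeg w (H i) u) ∧ H (i - 1) = (H i).erase (v i))
    (w0 : ℝ) (I : ℕ) (hI1 : 1 ≤ I) (hIn : I ≤ Fintype.card V)
    (hrI : w0 ≤ r I)
    (hImax : ∀ j, I < j → j ≤ Fintype.card V → r j < w0) :
    (∀ u ∈ H I, w0 ≤ wDeg w (H I) u) ∧
    ∀ S : Finset V, (∀ u ∈ S, w0 ≤ wDeg w S u) → S ⊆ H I := by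
  obtain ⟨hvI, hrdef, hmin, _⟩ := hpeel I hI1 hIn
  constructor
  · exact fun u hu => le_trans hrI (hmin u hu)
  · intro S hS
    have key : ∀ k, I + k ≤ Fintype.card V → S ⊆ H (I + k) → S ⊆ H I := by
      intro k
      induction k with
      | zero => intro _ h; simpa using h
      | succ k ih =>
        intro hle hsub
        obtain ⟨hvj, hrj, _, herase⟩ := hpeel (I + k + 1) (by omega) hle
        have hvjS : v (I + k + 1) ∉ S := by
          intro hmem
          have h1 : wDeg w S (v (I + k + 1)) ≤ wDeg w (H (I + k + 1)) (v (I + k + 1)) :=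
            Finset.sum_le_sum_of_subset_of_nonneg hsub (fun x _ _ => hnn _ x)
          have h2 := hImax (I + k + 1) (by omega) hle
          have h3 := hS _ hmem
          rw [← hrj] at h1
          linarith
        apply ih (by omega)
        have : I + k = I + k + 1 - 1 := by omega
        rw [this, herase]
        intro x hx
        exact Finset.mem_erase.mpr ⟨fun h => hvjS (h ▸ hx), hsub hx⟩
    have h := key (Fintype.card V - I) (by omega)
    rw [show I + (Fintype.card V - I) = Fintype.card V by omega, hHn] at h
    exact h (fun x _ => Finset.mem_univ x)
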